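/- Let k be an algebraically closed field, H a numerical semigroup with 1 ∉ H, and R = k[H]. For a maximal ideal M of R: if M ≠ P₀ := (t^{a_i} : generators of H), then μ_R(M) = 2; and μ_R(P₀) = μ(H), the minimal number of generators of the numerical semigroup H. -/

import Mathlib

open Polynomial

/-- Minimal number of generators of an ideal. -/
noncomputable def muIdeal {A : Type*} [CommRing A] (I : Ideal A) : ℕ :=
  sInf {n | ∃ s : Finset A, s.card = n ∧ Ideal.span (s : Set A) = I}

/-- Minimal number of generators of an additive submonoid of `ℕ`. -/
noncomputable def muSemigroup (H : AddSubmonoid ℕ) : ℕ :=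
  sInf {n | ∃ s : Finset ℕ, s.card = n ∧ AddSubmonoid.closure (s : Set ℕ) = H}

section Aux

variable {k : Type*} [Field k]

/-- coefficients of elements of `k[H]` are supported on `H`. -/
lemma coeff_mem_H (H : AddSubmonoid ℕ) {p : Polynomial k}
    (hp : p ∈ Algebra.adjoin k {p : Polynomial k | ∃ h ∈ H, p = (X : Polynomial k) ^ h})
    {i : ℕ} (hi : p.coeff i ≠ 0) : i ∈ H := by
  set S : Subalgebra k (Polynomial k) :=
    { carrier := {p : Polynomial k | ∀ i, p.coeff i ≠ 0 → i ∈ H}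
      mul_mem' := by
        intro p q hp hq i hi
        rw [Polynomial.coeff_mul] at hi
        obtain ⟨⟨a, b⟩, hab, hne⟩ := Finset.exists_ne_zero_of_sum_ne_zero hi
        rw [Finset.HasAntidiagonal.mem_antidiagonal] at hab
        subst hab
        exact add_mem (hp _ fun h => hne (by simp [h])) (hq _ fun h => hne (by simp [h]))
      add_mem' := by
        intro p q hp hq i hi
        rw [Polynomial.coeff_add] at hi
        by_cases h : p.coeff i = 0
        · exact hq i fun h' => hi (by simp [h, h'])
        · exact hp i h
      algebraMap_mem' := by
        intro a i hi
        rw [Polynomial.algebraMap_eq, Polynomial.coeff_C] at hi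
        rcases eq_or_ne i 0 with rfl | h
        · exact zero_mem H
        · simp [h] at hi } with hS
  have hle : Algebra.adjoin k {p : Polynomial k | ∃ h ∈ H, p = (X : Polynomial k) ^ h} ≤ S := by
    rw [Algebra.adjoin_le_iff]
    rintro q ⟨h, hh, rfl⟩
    intro i hi
    rw [Polynomial.coeff_X_pow] at hi
    simp only [ne_eq, ite_eq_right_iff, not_forall] at hi
    exact hi.1 ▸ hh
  exact hle hp i hi

/-- conversely, polynomials supported on `H` are in `k[H]`. -/
lemma mem_R_of_coeff (H : AddSubmonoid ℕ) {p : Polynomial k}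
    (hp : ∀ i, p.coeff i ≠ 0 → i ∈ H) :
    p ∈ Algebra.adjoin k {p : Polynomial k | ∃ h ∈ H, p = (X : Polynomial k) ^ h} := by
  rw [← Polynomial.sum_C_mul_X_pow_eq p, Polynomial.sum]
  apply sum_mem
  intro i hi
  have h1 : (C (p.coeff i) : Polynomial k) ∈ Algebra.adjoin k {p : Polynomial k | ∃ h ∈ H, p = (X : Polynomial k) ^ h} := by
    rw [← Polynomial.algebraMap_eq]
    exact Subalgebra.algebraMap_mem _ _
  have h2 : ((X : Polynomial k) ^ i) ∈ Algebra.adjoin k {p : Polynomial k | ∃ h ∈ H, p = (X : Polynomial k) ^ h} :=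
    Algebra.subset_adjoin ⟨i, hp i (Polynomial.mem_support_iff.mp hi), rfl⟩
  exact mul_mem h1 h2

lemma integral_of_pow_mem (R : Subalgebra k (Polynomial k)) {a : ℕ} (ha : a ≠ 0)
    (hXa : (X : Polynomial k) ^ a ∈ R) : Algebra.IsIntegral R (Polynomial k) := by
  constructor
  intro p
  induction p using Polynomial.induction_on with
  | C b =>
      have : (C b : Polynomial k) = algebraMap R (Polynomial k) ⟨C b, by
        rw [← Polynomial.algebraMap_eq]; exact Subalgebra.algebraMap_mem _ _⟩ := rfl
      rw [this]
      exact isIntegral_algebraMap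
  | add p q hp hq => exact hp.add hq
  | monomial n b hb =>
      have hX : IsIntegral R (X : Polynomial k) := by
        refine ⟨Polynomial.X ^ a - Polynomial.C (⟨X ^ a, hXa⟩ : R), monic_X_pow_sub_C _ ha, ?_⟩
        have : algebraMap R (Polynomial k) ⟨X ^ a, hXa⟩ = X ^ a := rfl
        simp [Polynomial.eval₂_sub, Polynomial.eval₂_pow, this]
      have : C b * X ^ (n + 1) = (C b * X ^ n) * X := by ring
      rw [this]
      exact hb.mul hX

lemma maximal_classify (R : Subalgebra k (Polynomial k)) [IsAlgClosed k]
    (hint : Algebra.IsIntegral R (Polynomial k))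
    (M : Ideal R) (hM : M.IsMaximal) :
    ∃ c : k, M = Ideal.comap (algebraMap R (Polynomial k)) (Ideal.span {X - C c}) := by
  haveI := hint
  obtain ⟨Q, hQmax, hQcomap⟩ := Ideal.exists_ideal_over_maximal_of_isIntegral (S := Polynomial k) M
    (by
      intro x hx
      rw [RingHom.mem_ker] at hx
      have : x = 0 := Subtype.ext (by simpa using hx)
      simp [this])
  obtain ⟨q, rfl⟩ := Submodule.IsPrincipal.principal Q
  have hq0 : q ≠ 0 := by
    rintro rfl
    have hb : Submodule.span (Polynomial k) ({(0:Polynomial k)} : Set (Polynomial k)) = Ideal.span {X} :=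
      hQmax.eq_of_le (Ideal.span_singleton_ne_top Polynomial.not_isUnit_X)
        (by rw [Submodule.span_zero_singleton]; exact bot_le)
    have : (X : Polynomial k) ∈ Submodule.span (Polynomial k) ({(0:Polynomial k)} : Set (Polynomial k)) := by
      rw [hb]; exact Ideal.subset_span rfl
    simp only [Submodule.span_zero_singleton, Submodule.mem_bot] at this
    exact Polynomial.X_ne_zero this
  have hprime : Prime q := (Ideal.span_singleton_prime hq0).mp hQmax.isPrime
  have hirr : Irreducible q := hprime.irreducible
  obtain ⟨c, hc⟩ := IsAlgClosed.exists_root q (Polynomial.degree_pos_of_irreducible hirr).ne'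
  have hdvd : (X - C c) ∣ q := Polynomial.dvd_iff_isRoot.mpr hc
  have hassoc : Associated (X - C c) q :=
    (Polynomial.irreducible_X_sub_C c).associated_of_dvd hirr hdvd
  refine ⟨c, ?_⟩
  rw [← hQcomap, Ideal.span_singleton_eq_span_singleton.mpr hassoc]

lemma mu_two (H : AddSubmonoid ℕ) (h1 : (1:ℕ) ∉ H)
    (R : Subalgebra k (Polynomial k))
    (hcoeff : ∀ p ∈ R, ∀ i : ℕ, Polynomial.coeff p i ≠ 0 → i ∈ H)
    (hmono : ∀ p : Polynomial k, (∀ i : ℕ, Polynomial.coeff p i ≠ 0 → i ∈ H) → p ∈ R)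
    (N : ℕ) (hN1 : 1 ≤ N) (hNH : ∀ m, N ≤ m → m ∈ H)
    (c : k) (hc : c ≠ 0)
    (M : Ideal R)
    (hMdef : M = Ideal.comap (algebraMap R (Polynomial k)) (Ideal.span {X - C c})) :
    muIdeal M = 2 := by
  have halg : ∀ x : R, algebraMap R (Polynomial k) x = (x : Polynomial k) := fun x => rfl
  have hmem : ∀ x : R, x ∈ M ↔ (X - C c) ∣ (x : Polynomial k) := by
    intro x
    rw [hMdef, Ideal.mem_comap, halg, Ideal.mem_span_singleton]
  -- constants are in R
  have hCmem : ∀ b : k, (C b : Polynomial k) ∈ R := by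
    intro b
    apply hmono
    intro i hi
    rcases eq_or_ne i 0 with rfl | h
    · exact zero_mem H
    · rw [Polynomial.coeff_C, if_neg h] at hi; exact absurd rfl hi
  have hge : ∀ (y : Polynomial k) (m : ℕ), N ≤ m → (y * X ^ m) ∈ R := by
    intro y m hm
    apply hmono
    intro i hi
    rw [Polynomial.coeff_mul_X_pow'] at hi
    by_cases h : m ≤ i
    · exact hNH i (le_trans hm h)
    · rw [if_neg h] at hi; exact absurd rfl hi
  have hXN : (X : Polynomial k) ^ N ∈ R := by simpa using hge 1 N le_rfl
  have hXN1 : (X : Polynomial k) ^ (N+1) ∈ R := by simpa using hge 1 (N+1) (by omega)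
  set F : R := ⟨X ^ N - C (c ^ N), sub_mem hXN (hCmem _)⟩ with hF
  set G : R := ⟨X ^ (N+1) - C (c ^ (N+1)), sub_mem hXN1 (hCmem _)⟩ with hG
  have hFM : F ∈ M := by
    rw [hmem, Polynomial.dvd_iff_isRoot]
    simp [Polynomial.IsRoot, hF]
  have hGM : G ∈ M := by
    rw [hmem, Polynomial.dvd_iff_isRoot]
    simp [Polynomial.IsRoot, hG]
  have hFG : Ideal.span ({F, G} : Set R) = M := by
    apply le_antisymm
    · rw [Ideal.span_le]
      rintro z (rfl | rfl)
      · exact hFM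
      · exact hGM
    · intro x hx
      obtain ⟨y, hy⟩ := (hmem x).mp hx
      set a₁ : R := ⟨C (c⁻¹ ^ N) * y * X ^ N, hge _ N le_rfl⟩ with ha₁
      set a₂ : R := ⟨C (c⁻¹ ^ N) * y * X ^ (N+1), hge _ (N+1) (by omega)⟩ with ha₂
      set b : R := ⟨C (c⁻¹ ^ N), hCmem _⟩ with hb
      have key : x = b * (a₁ * G - a₂ * F) - b * F * x := by
        apply Subtype.ext
        push_cast [ha₁, ha₂, hb, hF, hG]
        rw [hy]
        have hCc : (C (c⁻¹ ^ N) * C (c ^ N) : Polynomial k) = 1 := by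
          rw [← map_mul, ← mul_pow, inv_mul_cancel₀ hc, one_pow, map_one]
        have hw : (C (c ^ (N+1)) : Polynomial k) = C (c ^ N) * C c := by
          rw [← map_mul, ← pow_succ]
        linear_combination (-( (X - C c)*y + C (c⁻¹^N) * y * X^N * (X - C c))) * hCc
          + (C (c⁻¹^N) * C (c⁻¹^N) * y * X^N) * hw
      rw [key]
      have hFs : F ∈ Ideal.span ({F, G} : Set R) := Ideal.subset_span (by simp)
      have hGs : G ∈ Ideal.span ({F, G} : Set R) := Ideal.subset_span (by simp)
      exact sub_mem (Ideal.mul_mem_left _ _ (sub_mem (Ideal.mul_mem_left _ _ hGs)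
          (Ideal.mul_mem_left _ _ hFs)))
        (Ideal.mul_mem_right _ _ (Ideal.mul_mem_left _ _ hFs))
  -- now compute muIdeal M = 2
  classical
  have hFne0 : (F : Polynomial k) ≠ 0 := by
    simpa [hF] using Polynomial.X_pow_sub_C_ne_zero (show 0 < N by omega) (c ^ N)
  have hFneG : F ≠ G := by
    intro h
    have hdeg := congrArg (fun z : R => (z : Polynomial k).natDegree) h
    simp only [hF, hG] at hdeg
    rw [Polynomial.natDegree_X_pow_sub_C, Polynomial.natDegree_X_pow_sub_C] at hdeg
    omega
  have h2mem : 2 ∈ {n | ∃ s : Finset R, s.card = n ∧ Ideal.span (s : Set R) = M} := by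
    refine ⟨{F, G}, Finset.card_pair hFneG, ?_⟩
    rw [Finset.coe_insert, Finset.coe_singleton]
    exact hFG
  have hne : {n | ∃ s : Finset R, s.card = n ∧ Ideal.span (s : Set R) = M}.Nonempty := ⟨2, h2mem⟩
  have hlow : ∀ n ∈ {n | ∃ s : Finset R, s.card = n ∧ Ideal.span (s : Set R) = M}, 2 ≤ n := by
    rintro n ⟨s, rfl, hs⟩
    by_contra hlt
    push_neg at hlt
    interval_cases h : s.card
    · -- card 0
      rw [Finset.card_eq_zero] at h
      subst h
      rw [Finset.coe_empty, Ideal.span_empty] at hs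
      have : F ∈ (⊥ : Ideal R) := hs ▸ hFM
      rw [Ideal.mem_bot] at this
      exact hFne0 (congrArg Subtype.val this)
    · -- card 1
      rw [Finset.card_eq_one] at h
      obtain ⟨u, rfl⟩ := h
      rw [Finset.coe_singleton] at hs
      have huM : u ∈ M := hs ▸ Ideal.mem_span_singleton_self u
      obtain ⟨w, hwu⟩ := (hmem u).mp huM
      obtain ⟨r, hr⟩ := Ideal.mem_span_singleton.mp (hs ▸ hFM)
      obtain ⟨r', hr'⟩ := Ideal.mem_span_singleton.mp (hs ▸ hGM)
      have hdf : (u : Polynomial k) ∣ (F : Polynomial k) := ⟨r, congrArg Subtype.val hr⟩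
      have hdg : (u : Polynomial k) ∣ (G : Polynomial k) := ⟨r', congrArg Subtype.val hr'⟩
      have hkey : (u : Polynomial k) ∣ C (c ^ N) * (X - C c) := by
        have : (G : Polynomial k) - X * (F : Polynomial k) = C (c ^ N) * (X - C c) := by
          simp only [hF, hG]
          have : (C (c ^ (N+1)) : Polynomial k) = C (c ^ N) * C c := by
            rw [← map_mul, ← pow_succ]
          rw [this]
          ring
        rw [← this]
        exact dvd_sub hdg (hdf.mul_left X)
      rw [hwu] at hkey
      have hXc : (X - C c : Polynomial k) ≠ 0 := Polynomial.X_sub_C_ne_zero c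
      have hwdvd : w ∣ C (c ^ N) := by
        have h' : (X - C c) * w ∣ (X - C c) * C (c ^ N) := by
          rwa [mul_comm (C (c ^ N)) (X - C c)] at hkey
        exact (mul_dvd_mul_iff_left hXc).mp h'
      have hwunit : IsUnit w := isUnit_of_dvd_unit hwdvd (by
        rw [Polynomial.isUnit_C]
        exact (pow_ne_zero N hc).isUnit)
      obtain ⟨b', hb'unit, hb'⟩ := Polynomial.isUnit_iff.mp hwunit
      have h1H : (1 : ℕ) ∈ H := by
        apply hcoeff (u : Polynomial k) u.2 1
        rw [hwu, ← hb', mul_comm]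
        simp only [Polynomial.coeff_C_mul, Polynomial.coeff_sub, Polynomial.coeff_X_one,
          Polynomial.coeff_C]
        rw [if_neg (by omega)]
        simpa using hb'unit.ne_zero
      exact h1 h1H
  exact le_antisymm (Nat.sInf_le h2mem) (hlow _ (Nat.sInf_mem hne))

set_option synthInstance.maxHeartbeats 1000000 in
set_option maxHeartbeats 1000000 in
lemma mu_P0 (H : AddSubmonoid ℕ)
    (R : Subalgebra k (Polynomial k))
    (hcoeff : ∀ p ∈ R, ∀ i : ℕ, Polynomial.coeff p i ≠ 0 → i ∈ H)
    (hmono : ∀ p : Polynomial k, (∀ i : ℕ, Polynomial.coeff p i ≠ 0 → i ∈ H) → p ∈ R)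
    (N : ℕ) (hN1 : 1 ≤ N) (hNH : ∀ m, N ≤ m → m ∈ H)
    (P₀ : Ideal R)
    (hP₀ : P₀ = (Ideal.span {(X : Polynomial k)}).comap (algebraMap R (Polynomial k))) :
    muIdeal P₀ = muSemigroup H := by
  classical
  have hmem : ∀ x : R, x ∈ P₀ ↔ (x : Polynomial k).coeff 0 = 0 := by
    intro x
    rw [hP₀, Ideal.mem_comap, Ideal.mem_span_singleton]
    exact ⟨fun h => Polynomial.X_dvd_iff.mp h, fun h => Polynomial.X_dvd_iff.mpr h⟩
  set Gset : Set ℕ := {h | h ∈ H ∧ h ≠ 0 ∧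
    ∀ a b : ℕ, a ∈ H → b ∈ H → a ≠ 0 → b ≠ 0 → a + b ≠ h} with hGset
  have hGfin : Gset.Finite := by
    apply Set.Finite.subset (Set.finite_Iic (2 * N))
    intro h hh
    by_contra hgt
    simp only [Set.mem_Iic, not_le] at hgt
    exact hh.2.2 N (h - N) (hNH N le_rfl) (hNH (h - N) (by omega)) (by omega) (by omega) (by omega)
  set Gfin : Finset ℕ := hGfin.toFinset with hGfinDef
  have hGmem : ∀ g, g ∈ Gfin ↔ g ∈ Gset := fun g => hGfin.mem_toFinset
  have hGsub : Gset ⊆ (H : Set ℕ) := fun g hg => hg.1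
  have hclosure : AddSubmonoid.closure Gset = H := by
    apply le_antisymm (AddSubmonoid.closure_le.mpr hGsub)
    intro h hh
    induction h using Nat.strong_induction_on with
    | _ h ih =>
      by_cases h0 : h = 0
      · subst h0; exact zero_mem _
      by_cases hg : h ∈ Gset
      · exact AddSubmonoid.subset_closure hg
      · rw [hGset] at hg
        simp only [Set.mem_setOf_eq, not_and, not_forall] at hg
        obtain ⟨a, b, haH, hbH, ha0, hb0, hab⟩ := hg hh h0
        push_neg at hab
        rw [← hab]
        exact add_mem (ih a (by omega) haH) (ih b (by omega) hbH)
  -- decomposition of positive elements of H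
  have hdecomp : ∀ i ∈ H, i ≠ 0 → ∃ g ∈ Gset, ∃ r ∈ H, i = g + r := by
    intro i hi hi0
    have : i ∈ AddSubmonoid.closure Gset := hclosure ▸ hi
    obtain ⟨l, hl, hlsum⟩ := AddSubmonoid.exists_multiset_of_mem_closure this
    have hlne : l ≠ 0 := by
      rintro rfl
      simp at hlsum
      exact hi0 hlsum.symm
    obtain ⟨a, ha⟩ := Multiset.exists_mem_of_ne_zero hlne
    obtain ⟨t, rfl⟩ := Multiset.exists_cons_of_mem ha
    refine ⟨a, hl a (Multiset.mem_cons_self a t), t.sum, ?_, ?_⟩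
    · exact AddSubmonoid.multiset_sum_mem H t (fun y hy => hGsub (hl y (Multiset.mem_cons_of_mem hy)))
    · rw [← hlsum, Multiset.sum_cons]
  -- monomial elements of R
  have hXmem : ∀ g ∈ H, (X : Polynomial k) ^ g ∈ R := by
    intro g hg
    apply hmono
    intro i hi
    rw [Polynomial.coeff_X_pow] at hi
    by_cases h : i = g
    · exact h ▸ hg
    · rw [if_neg h] at hi; exact absurd rfl hi
  set e : ℕ → R := fun g => if hg : g ∈ H then ⟨X ^ g, hXmem g hg⟩ else 1 with he
  have heval : ∀ g ∈ H, (e g : Polynomial k) = X ^ g := by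
    intro g hg
    rw [he]
    simp only [dif_pos hg]
  set s₀ : Finset R := Gfin.image e with hs₀
  have hcard : s₀.card = Gfin.card := by
    apply Finset.card_image_of_injOn
    intro g1 h1' g2 h2' hval
    have e1 : (e g1 : Polynomial k) = X ^ g1 := heval g1 (hGsub ((hGmem g1).mp h1'))
    have e2 : (e g2 : Polynomial k) = X ^ g2 := heval g2 (hGsub ((hGmem g2).mp h2'))
    have : (X : Polynomial k) ^ g1 = X ^ g2 := by rw [← e1, ← e2, hval]
    have := congrArg Polynomial.natDegree this
    rwa [Polynomial.natDegree_X_pow, Polynomial.natDegree_X_pow] at this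
  have hspan0 : Ideal.span (s₀ : Set R) = P₀ := by
    apply le_antisymm
    · rw [Ideal.span_le]
      rintro z hz
      rw [hs₀, Finset.coe_image] at hz
      obtain ⟨g, hg, rfl⟩ := hz
      have hgG : g ∈ Gset := (hGmem g).mp hg
      rw [SetLike.mem_coe, hmem, heval g (hGsub hgG), Polynomial.coeff_X_pow, if_neg]
      exact fun h => hgG.2.1 h.symm
    · intro x hx
      rw [hmem x] at hx
      -- write x as a sum of monomial terms
      set term : ℕ → R := fun i =>
        if hi : i ∈ H then ⟨C ((x : Polynomial k).coeff i) * X ^ i,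
          mul_mem (by
            apply hmono
            intro j hj
            rcases eq_or_ne j 0 with rfl | hj0
            · exact zero_mem H
            · rw [Polynomial.coeff_C, if_neg hj0] at hj; exact absurd rfl hj) (hXmem i hi)⟩
        else 0 with hterm
      have hxsum : x = ∑ i ∈ (x : Polynomial k).support, term i := by
        apply Subtype.ext
        rw [AddSubmonoidClass.coe_finset_sum]
        calc (x : Polynomial k)
            = ∑ i ∈ (x : Polynomial k).support, C ((x : Polynomial k).coeff i) * X ^ i :=
              Polynomial.as_sum_support_C_mul_X_pow _
          _ = ∑ i ∈ (x : Polynomial k).support, ((term i : R) : Polynomial k) := by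
              apply Finset.sum_congr rfl
              intro i hi
              have hiH : i ∈ H := hcoeff _ x.2 i (Polynomial.mem_support_iff.mp hi)
              rw [hterm]
              simp only [dif_pos hiH]
      rw [hxsum]
      apply Ideal.sum_mem
      intro i hi
      have hiH : i ∈ H := hcoeff _ x.2 i (Polynomial.mem_support_iff.mp hi)
      have hi0 : i ≠ 0 := by
        rintro rfl
        exact (Polynomial.mem_support_iff.mp hi) hx
      obtain ⟨g, hgG, r, hrH, hir⟩ := hdecomp i hiH hi0
      have hterm_eq : term i = (⟨C ((x : Polynomial k).coeff i) * X ^ r,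
          mul_mem (by
            apply hmono
            intro j hj
            rcases eq_or_ne j 0 with rfl | hj0
            · exact zero_mem H
            · rw [Polynomial.coeff_C, if_neg hj0] at hj; exact absurd rfl hj) (hXmem r hrH)⟩ : R) * e g := by
        apply Subtype.ext
        push_cast
        rw [heval g (hGsub hgG), hterm]
        simp only [dif_pos hiH]
        rw [hir, pow_add]
        ring
      rw [hterm_eq]
      apply Ideal.mul_mem_left
      apply Ideal.subset_span
      rw [hs₀, Finset.coe_image]
      exact ⟨g, (hGmem g).mpr hgG, rfl⟩
  -- the linear functional picking out coefficients indexed by Gfin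
  set θ : R →ₗ[k] ({g // g ∈ Gfin} → k) :=
    { toFun := fun x => fun g => (x : Polynomial k).coeff g.1
      map_add' := by intro x y; funext g; simp
      map_smul' := by intro a x; funext g; simp } with hθ
  have hθapply : ∀ (x : R) (g : {g // g ∈ Gfin}), θ x g = (x : Polynomial k).coeff g.1 :=
    fun x g => rfl
  -- the key lower bound for muIdeal
  have hlowI : ∀ (s : Finset R), Ideal.span (s : Set R) = P₀ → Gfin.card ≤ s.card := by
    intro s hs
    have hθspan : ∀ x ∈ Ideal.span (s : Set R),
        θ x ∈ Submodule.span k (θ '' (s : Set R)) := by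
      intro x hx
      induction hx using Submodule.span_induction with
      | mem x hxs => exact Submodule.subset_span ⟨x, hxs, rfl⟩
      | zero => rw [map_zero]; exact zero_mem _
      | add x y hx hy hx' hy' => rw [map_add]; exact add_mem hx' hy'
      | smul r x hx hx' =>
        have hxP : x ∈ P₀ := hs ▸ hx
        have hx0 : (x : Polynomial k).coeff 0 = 0 := (hmem x).mp hxP
        have : θ (r • x) = ((r : Polynomial k).coeff 0) • θ x := by
          funext g
          have hgG : g.1 ∈ Gset := (hGmem g.1).mp g.2
          rw [hθapply]
          have hcoe : ((r • x : R) : Polynomial k) = (r : Polynomial k) * (x : Polynomial k) := rfl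
          rw [hcoe, Polynomial.coeff_mul]
          rw [Finset.sum_eq_single_of_mem ((0 : ℕ), g.1)
            (Finset.HasAntidiagonal.mem_antidiagonal.mpr (by omega))]
          · simp [hθapply]
          · rintro ⟨a, b⟩ hab hne
            rw [Finset.HasAntidiagonal.mem_antidiagonal] at hab
            by_cases hra : (r : Polynomial k).coeff a = 0
            · rw [hra, zero_mul]
            by_cases hxb : (x : Polynomial k).coeff b = 0
            · rw [hxb, mul_zero]
            have haH : a ∈ H := hcoeff _ r.2 a hra
            have hbH : b ∈ H := hcoeff _ x.2 b hxb
            have ha0 : a ≠ 0 := by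
              rintro rfl
              simp at hab
              exact hne (by simp [hab])
            have hb0 : b ≠ 0 := by
              rintro rfl
              exact hxb hx0
            exact absurd hab (hgG.2.2 a b haH hbH ha0 hb0)
        rw [this]
        exact Submodule.smul_mem _ _ hx'
    have htop : Submodule.span k (θ '' (s : Set R)) = ⊤ := by
      rw [eq_top_iff, ← (Pi.basisFun k {g // g ∈ Gfin}).span_eq, Submodule.span_le]
      rintro v ⟨g, rfl⟩
      have hgH : g.1 ∈ H := hGsub ((hGmem g.1).mp g.2)
      have hin : e g.1 ∈ P₀ := by
        rw [hmem, heval g.1 hgH, Polynomial.coeff_X_pow, if_neg]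
        exact fun h => ((hGmem g.1).mp g.2).2.1 h.symm
      have : θ (e g.1) = Pi.basisFun k {g // g ∈ Gfin} g := by
        funext g'
        rw [hθapply, heval g.1 hgH, Polynomial.coeff_X_pow, Pi.basisFun_apply]
        by_cases hgg : g' = g
        · subst hgg; rw [if_pos rfl]; simp
        · rw [if_neg (fun h => hgg (Subtype.ext h))]
          simp [Pi.single_apply, hgg]
      rw [← this]
      exact hθspan _ (hs.symm ▸ hin)
    -- dimension count
    have hfr1 : Module.finrank k ({g // g ∈ Gfin} → k) = Gfin.card := by
      rw [Module.finrank_fintype_fun_eq_card, Fintype.card_coe]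
    have himg : θ '' (s : Set R) = (↑(s.image (fun x => θ x)) : Set ({g // g ∈ Gfin} → k)) := by
      rw [Finset.coe_image]
    have hfr2 : Module.finrank k ({g // g ∈ Gfin} → k)
        ≤ (s.image (fun x => θ x)).card := by
      have := finrank_span_le_card (R := k)
        (↑(s.image (fun x => θ x)) : Set ({g // g ∈ Gfin} → k))
      rw [Finset.toFinset_coe] at this
      rw [← himg, htop] at this
      rwa [finrank_top] at this
    calc Gfin.card = Module.finrank k ({g // g ∈ Gfin} → k) := hfr1.symm
      _ ≤ (s.image (fun x => θ x)).card := hfr2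
      _ ≤ s.card := Finset.card_image_le
  -- muIdeal P₀ = Gfin.card
  have hmuI : muIdeal P₀ = Gfin.card := by
    have hmemset : Gfin.card ∈ {n | ∃ s : Finset R, s.card = n ∧ Ideal.span (s : Set R) = P₀} :=
      ⟨s₀, hcard, hspan0⟩
    apply le_antisymm (Nat.sInf_le hmemset)
    obtain ⟨s, hscard, hsspan⟩ := Nat.sInf_mem (⟨Gfin.card, hmemset⟩ :
      {n | ∃ s : Finset R, s.card = n ∧ Ideal.span (s : Set R) = P₀}.Nonempty)
    rw [← hscard]
    exact hlowI s hsspan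
  -- muSemigroup H = Gfin.card
  have hmuS : muSemigroup H = Gfin.card := by
    have hmemset : Gfin.card ∈ {n | ∃ s : Finset ℕ, s.card = n ∧ AddSubmonoid.closure (s : Set ℕ) = H} :=
      ⟨Gfin, rfl, by rw [hGfinDef, Set.Finite.coe_toFinset]; exact hclosure⟩
    apply le_antisymm (Nat.sInf_le hmemset)
    obtain ⟨s, hscard, hsspan⟩ := Nat.sInf_mem (⟨Gfin.card, hmemset⟩ :
      {n | ∃ s : Finset ℕ, s.card = n ∧ AddSubmonoid.closure (s : Set ℕ) = H}.Nonempty)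
    rw [← hscard]
    apply Finset.card_le_card
    intro g hg
    have hgG : g ∈ Gset := (hGmem g).mp hg
    have hssub : (s : Set ℕ) ⊆ (H : Set ℕ) := by
      rw [← hsspan]
      exact AddSubmonoid.subset_closure
    have hgcl : g ∈ AddSubmonoid.closure (s : Set ℕ) := by rw [hsspan]; exact hgG.1
    obtain ⟨l, hl, hlsum⟩ := AddSubmonoid.exists_multiset_of_mem_closure hgcl
    -- show g ∈ s by induction on the multiset
    clear hgcl
    have main : ∀ l : Multiset ℕ, (∀ y ∈ l, y ∈ (s : Set ℕ)) → l.sum = g → g ∈ s := by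
      intro l
      induction l using Multiset.induction_on with
      | empty =>
        intro _ hsum
        simp at hsum
        exact absurd hsum.symm hgG.2.1
      | cons a t ih =>
        intro hmem' hsum
        rw [Multiset.sum_cons] at hsum
        rcases eq_or_ne a 0 with rfl | ha0
        · exact ih (fun y hy => hmem' y (Multiset.mem_cons_of_mem hy)) (by omega)
        rcases eq_or_ne t.sum 0 with ht0 | ht0
        · have : a = g := by omega
          subst this
          exact hmem' a (Multiset.mem_cons_self a t)
        · exfalso
          have haH : a ∈ H := hssub (hmem' a (Multiset.mem_cons_self a t))
          have htH : t.sum ∈ H := AddSubmonoid.multiset_sum_mem H t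
            (fun y hy => hssub (hmem' y (Multiset.mem_cons_of_mem hy)))
          exact hgG.2.2 a t.sum haH htH ha0 ht0 hsum
    exact main l hl hlsum
  rw [hmuI, hmuS]


end Aux

/-- for `k` algebraically closed, a numerical semigroup `H` with
`1 ∉ H`, and `R = k[H]`: every maximal ideal `M ≠ P₀ = tk[t] ∩ R` satisfies
`μ_R(M) = 2`, and `μ_R(P₀) = μ(H)`. -/
theorem mu_of_maximal_ideal_semigroup_ring
    (k : Type*) [Field k] [IsAlgClosed k]
    (H : AddSubmonoid ℕ) (hfin : ((H : Set ℕ)ᶜ).Finite) (h1 : (1 : ℕ) ∉ H)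
    (R : Subalgebra k (Polynomial k))
    (hRdef : R = Algebra.adjoin k {p : Polynomial k | ∃ h ∈ H, p = (X : Polynomial k) ^ h})
    (P₀ : Ideal R)
    (hP₀ : P₀ = (Ideal.span {(X : Polynomial k)}).comap (algebraMap R (Polynomial k)))
    (M : Ideal R) (hM : M.IsMaximal) :
    (M ≠ P₀ → muIdeal M = 2) ∧ (M = P₀ → muIdeal M = muSemigroup H) := by
  -- conductor bound
  obtain ⟨B, hB⟩ := hfin.bddAbove
  set N : ℕ := B + 1 with hN
  have hN1 : 1 ≤ N := by omega
  have hNH : ∀ m, N ≤ m → m ∈ H := by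
    intro m hm
    by_contra hmH
    have := hB (Set.mem_compl hmH)
    omega
  -- coefficient characterization of R
  have hcoeff : ∀ p ∈ R, ∀ i : ℕ, Polynomial.coeff p i ≠ 0 → i ∈ H := by
    intro p hp i hi
    rw [hRdef] at hp
    exact coeff_mem_H H hp hi
  have hmono : ∀ p : Polynomial k, (∀ i : ℕ, Polynomial.coeff p i ≠ 0 → i ∈ H) → p ∈ R := by
    intro p hp
    rw [hRdef]
    exact mem_R_of_coeff H hp
  -- integrality and classification of maximal ideals
  have hXN : (X : Polynomial k) ^ N ∈ R := by
    apply hmono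
    intro i hi
    rw [Polynomial.coeff_X_pow] at hi
    by_cases h : i = N
    · exact h ▸ hNH N le_rfl
    · rw [if_neg h] at hi; exact absurd rfl hi
  have hint : Algebra.IsIntegral R (Polynomial k) :=
    integral_of_pow_mem R (by omega : N ≠ 0) hXN
  obtain ⟨c, hc⟩ := maximal_classify R hint M hM
  constructor
  · intro hne
    have hc0 : c ≠ 0 := by
      rintro rfl
      apply hne
      rw [hc, hP₀]
      congr 1
      rw [map_zero, sub_zero]
    exact mu_two H h1 R hcoeff hmono N hN1 hNH c hc0 M hc
  · intro heq
    rw [heq]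
    exact mu_P0 H R hcoeff hmono N hN1 hNH P₀ hP₀
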